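/- Let H be a modular hyperplane of a matroid M with complementary cocircuit C* = E(M)−H. Then cl(C*) is a rotunda of M, and every other rotunda of M is contained in H. -/

import Mathlib

open Set

namespace Matroid

variable {α : Type*} {β : Type*}

/-- The rank of a set in a matroid: the supremum of sizes of independent subsets. -/
noncomputable def mRank (M : Matroid α) (X : Set α) : ℕ :=
  sSup {n : ℕ | ∃ I, M.Indep I ∧ I ⊆ X ∧ I.ncard = n}

/-- The rank of a matroid. -/
noncomputable def mRk (M : Matroid α) : ℕ := M.mRank M.E

/-- A flat `F` is modular if `r F + r F' = r (F ∪ F') + r (F ∩ F')` for every flat `F'`. -/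
def IsModularFlat (M : Matroid α) (F : Set α) : Prop :=
  M.IsFlat F ∧ ∀ F', M.IsFlat F' →
    M.mRank F + M.mRank F' = M.mRank (F ∪ F') + M.mRank (F ∩ F')

/-- A proper flat is a flat other than the ground set. -/
def IsProperFlat (M : Matroid α) (F : Set α) : Prop := M.IsFlat F ∧ F ≠ M.E

/-- A vertical cover is a pair of proper flats whose union is the ground set. -/
def VerticalCover (M : Matroid α) (F F' : Set α) : Prop :=
  M.IsProperFlat F ∧ M.IsProperFlat F' ∧ F ∪ F' = M.E

/-- A modular cover is a vertical cover by two modular flats. -/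
def ModularCover (M : Matroid α) (F F' : Set α) : Prop :=
  M.VerticalCover F F' ∧ M.IsModularFlat F ∧ M.IsModularFlat F'

/-- A matroid is round if it has no vertical cover. -/
def Round (M : Matroid α) : Prop := ∀ F F', ¬ M.VerticalCover F F'

/-- A subset of the ground set is round if the restriction to it is round. -/
def RoundSet (M : Matroid α) (X : Set α) : Prop := X ⊆ M.E ∧ (M ↾ X).Round

/-- A rotunda is a maximal round flat. -/
def Rotunda (M : Matroid α) (R : Set α) : Prop :=
  M.IsFlat R ∧ M.RoundSet R ∧ ∀ R', M.IsFlat R' → M.RoundSet R' → R ⊆ R' → R' = R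

/-- A matroid of rank `r` is supersolvable if there is a chain of modular flats
`F 0 ⊆ F 1 ⊆ ⋯ ⊆ F r` with `r (F i) = i` for each `i`. -/
def Supersolvable (M : Matroid α) : Prop :=
  ∃ F : ℕ → Set α, (∀ i ≤ M.mRk, M.IsModularFlat (F i) ∧ M.mRank (F i) = i) ∧
    ∀ i < M.mRk, F i ⊆ F (i + 1)

/-- A matroid is saturated if every round flat is modular. -/
def Saturated (M : Matroid α) : Prop :=
  ∀ F, M.IsFlat F → M.RoundSet F → M.IsModularFlat F

/-- A circuit: a minimal dependent subset of the ground set. -/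
def Circ (M : Matroid α) (C : Set α) : Prop :=
  C ⊆ M.E ∧ ¬ M.Indep C ∧ ∀ D ⊂ C, M.Indep D

/-- A matroid is connected if it is non-empty and every two distinct elements lie in a
common circuit. -/
def ConnectedM (M : Matroid α) : Prop :=
  M.E.Nonempty ∧ ∀ x ∈ M.E, ∀ y ∈ M.E, x = y ∨ ∃ C, M.Circ C ∧ x ∈ C ∧ y ∈ C

/-- A hyperplane: a flat of rank `r M - 1`. -/
def IsHyperplane (M : Matroid α) (H : Set α) : Prop :=
  M.IsFlat H ∧ M.mRank H + 1 = M.mRk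

/-- The union of the projections `P_H(x, y) = H ∩ cl (x ∪ y)` onto the modular hyperplane `H`,
taken over all pairs of distinct rank-one flats `x = cl {a}`, `y = cl {b}` spanned by
elements `a, b` of `X`. -/
def projUnion (M : Matroid α) (H X : Set α) : Set α :=
  ⋃ a ∈ X, ⋃ b ∈ X, ⋃ (_ : M.closure {a} ≠ M.closure {b}), H ∩ M.closure {a, b}

/-- Two elements are related if they are equal or lie in a common circuit; the connected
components of a matroid are the restrictions to the equivalence classes of this relation. -/
def connRel (M : Matroid α) (x y : α) : Prop :=
  x = y ∨ ∃ C, M.Circ C ∧ x ∈ C ∧ y ∈ C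

/-- The rotunda graph of a matroid: vertices are the rotunda; two rotunda are adjacent if
they intersect and there is a modular cover separating them at their intersection. -/
def rotundaGraph (M : Matroid α) : SimpleGraph {R : Set α // M.Rotunda R} where
  Adj R₁ R₂ := R₁ ≠ R₂ ∧ (R₁.1 ∩ R₂.1).Nonempty ∧
    ∃ F₁ F₂, M.ModularCover F₁ F₂ ∧ R₁.1 ⊆ F₁ ∧ R₂.1 ⊆ F₂ ∧ F₁ ∩ F₂ = R₁.1 ∩ R₂.1
  symm := by
    refine ⟨?_⟩
    rintro a b ⟨hne, hint, F₁, F₂, ⟨⟨hp1, hp2, hu⟩, hm1, hm2⟩, h1, h2, hi⟩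
    refine ⟨hne.symm, by rwa [Set.inter_comm], F₂, F₁,
      ⟨⟨hp2, hp1, by rwa [Set.union_comm]⟩, hm2, hm1⟩, h2, h1, ?_⟩
    rw [Set.inter_comm, hi, Set.inter_comm]
  loopless := ⟨fun a h => h.1 rfl⟩

/-- A rotunda tree of `M`: a tree on the rotunda of `M` such that for each element `x` of the
ground set, the rotunda containing `x` induce a (nonempty) subtree. -/
def IsRotundaTree (M : Matroid α) (T : SimpleGraph {R : Set α // M.Rotunda R}) : Prop :=
  T.IsTree ∧ ∀ x ∈ M.E, (T.induce {t : {R : Set α // M.Rotunda R} | x ∈ t.1}).Connected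

/-- A legitimate weighting of `M`: zero on the empty set, and strictly monotone under proper
inclusion on the set consisting of `∅` and the pairwise intersections of distinct rotunda. -/
def LegitimateWeighting (M : Matroid α) (σ : Set α → ℕ) : Prop :=
  σ ∅ = 0 ∧
  ∀ X X' : Set α,
    (X = ∅ ∨ ∃ R R', M.Rotunda R ∧ M.Rotunda R' ∧ R ≠ R' ∧ X = R ∩ R') →
    (X' = ∅ ∨ ∃ R R', M.Rotunda R ∧ M.Rotunda R' ∧ R ≠ R' ∧ X' = R ∩ R') →
    X ⊂ X' → σ X < σ X'

/-- The total weight of a graph on the rotunda of `M`, where the edge joining rotunda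
`R` and `R'` gets weight `σ (R ∩ R')`. -/
noncomputable def treeWeight {M : Matroid α} (σ : Set α → ℕ)
    (T : SimpleGraph {R : Set α // M.Rotunda R}) : ℕ :=
  ∑ᶠ e ∈ T.edgeSet,
    Sym2.lift ⟨fun a b => σ (a.1 ∩ b.1), fun a b => by simp [Set.inter_comm]⟩ e

/-- A tree-decomposition of a matroid: a tree together with bags covering the ground set. -/
def IsTreeDecomp (M : Matroid α) (T : SimpleGraph β) (τ : β → Set α) : Prop :=
  T.IsTree ∧ ∀ x ∈ M.E, ∃ t, x ∈ τ t

/-- The node-width of a node `t` in a tree-decomposition `(T, τ)` of `M`: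
`(Σ_i r (τ t ∪ ⋃_{k ≠ i} F_k)) − (d − 1) · r M`, where `F_1, …, F_d` are the unions of the
bags over the connected components of `T − t`. -/
noncomputable def nodeWidth (M : Matroid α) (T : SimpleGraph β) (τ : β → Set α) (t : β) : ℤ :=
  (∑ᶠ c : (T.induce {s : β | s ≠ t}).ConnectedComponent,
      (M.mRank (τ t ∪ ⋃ (s : {s : β // s ≠ t})
        (_ : (T.induce {s : β | s ≠ t}).connectedComponentMk s ≠ c), τ s.1) : ℤ))
    - ((Nat.card (T.induce {s : β | s ≠ t}).ConnectedComponent : ℤ) - 1) * (M.mRk : ℤ)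

/-- The width of a tree-decomposition: the maximum node-width. -/
noncomputable def decompWidth (M : Matroid α) (T : SimpleGraph β) (τ : β → Set α) : ℤ :=
  sSup (Set.range (M.nodeWidth T τ))

/-- The tree-width of a matroid: the minimum width of a (finite) tree-decomposition. -/
noncomputable def treeWidth (M : Matroid α) : ℕ :=
  sInf {n : ℕ | ∃ (β : Type) (T : SimpleGraph β) (τ : β → Set α),
    Finite β ∧ M.IsTreeDecomp T τ ∧ ∀ t, M.nodeWidth T τ t ≤ (n : ℤ)}

end Matroid

namespace SimpleGraph

/-- A graph is chordal if every cycle with at least four edges has a chord: an edge of the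
graph joining two vertices of the cycle that is not an edge of the cycle. -/
def IsChordal {V : Type*} (G : SimpleGraph V) : Prop :=
  ∀ ⦃v : V⦄ (w : G.Walk v v), w.IsCycle → 4 ≤ w.length →
    ∃ x y, x ∈ w.support ∧ y ∈ w.support ∧ G.Adj x y ∧ s(x, y) ∉ w.edges

/-- A maximal clique of a graph. -/
def MaxClique {V : Type*} (G : SimpleGraph V) (C : Set V) : Prop :=
  G.IsClique C ∧ ∀ D, G.IsClique D → C ⊆ D → D = C

/-- The reduced clique graph of a graph: vertices are the maximal cliques; two maximal
cliques are adjacent if they intersect and every walk from one side to the other passes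
through their intersection. -/
def reducedCliqueGraph {V : Type*} (G : SimpleGraph V) :
    SimpleGraph {C : Set V // G.MaxClique C} where
  Adj C₁ C₂ := C₁ ≠ C₂ ∧ (C₁.1 ∩ C₂.1).Nonempty ∧
    ∀ u ∈ C₁.1 \ C₂.1, ∀ v ∈ C₂.1 \ C₁.1, ∀ p : G.Walk u v,
      ∃ z ∈ p.support, z ∈ C₁.1 ∩ C₂.1
  symm := by
    refine ⟨?_⟩
    rintro a b ⟨hne, hint, hsep⟩
    refine ⟨hne.symm, by rwa [Set.inter_comm], fun u hu v hv p => ?_⟩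
    obtain ⟨z, hz, hz2⟩ := hsep v hv u hu p.reverse
    refine ⟨z, ?_, by rwa [Set.inter_comm]⟩
    simpa [SimpleGraph.Walk.support_reverse] using hz
  loopless := ⟨fun a h => h.1 rfl⟩

end SimpleGraph

open Matroid

namespace Matroid

variable {α : Type*} {M : Matroid α} {X Y K F H I R : Set α} {a b c e : α} {n : ℕ}

lemma flat_closure' (M : Matroid α) (X : Set α) : M.IsFlat (M.closure X) := by
  rw [isFlat_iff_isClosed]
  refine ⟨M.closure_subset_ground X, ?_⟩
  have h : (⟨M.closure X, M.closure_subset_ground X⟩ : Iic M.E)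
      = M.subtypeClosure ⟨X ∩ M.E, inter_subset_right⟩ :=
    Subtype.ext (M.closure_eq_subtypeClosure X)
  rw [h]
  exact M.subtypeClosure.isClosed_closure _

lemma flat_of_closure_eq' (h : M.closure F = F) : M.IsFlat F := h ▸ M.flat_closure' F

lemma restrict_closure' (hK : K ⊆ M.E) (hX : X ⊆ K) :
    (M ↾ K).closure X = M.closure X ∩ K := by
  obtain ⟨I, hI⟩ := (M ↾ K).exists_isBasis X (by simpa using hX)
  have hIM : M.IsBasis I X := ((isBasis_restrict_iff hK).1 hI).1
  rw [← hI.closure_eq_closure, ← hIM.closure_eq_closure]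
  ext x
  rw [mem_inter_iff, hI.indep.mem_closure_iff', hIM.indep.mem_closure_iff',
    restrict_ground_eq, restrict_indep_iff]
  constructor
  · rintro ⟨hxK, h2⟩
    exact ⟨⟨hK hxK, fun hind => h2 ⟨hind, insert_subset hxK (hI.subset.trans hX)⟩⟩, hxK⟩
  · rintro ⟨⟨hxE, h2⟩, hxK⟩
    exact ⟨hxK, fun hind => h2 hind.1⟩

lemma mRank_bddAbove (M : Matroid α) [M.Finite] (X : Set α) :
    BddAbove {n : ℕ | ∃ I, M.Indep I ∧ I ⊆ X ∧ I.ncard = n} := by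
  refine ⟨M.E.ncard, ?_⟩
  rintro n ⟨I, hI, -, rfl⟩
  exact Set.ncard_le_ncard hI.subset_ground M.ground_finite

lemma mRank_set_nonempty (M : Matroid α) (X : Set α) :
    {n : ℕ | ∃ I, M.Indep I ∧ I ⊆ X ∧ I.ncard = n}.Nonempty :=
  ⟨0, ∅, M.empty_indep, empty_subset X, by simp⟩

lemma le_mRank [M.Finite] (hI : M.Indep I) (hIX : I ⊆ X) : I.ncard ≤ M.mRank X :=
  le_csSup (M.mRank_bddAbove X) ⟨I, hI, hIX, rfl⟩

lemma mRank_le (h : ∀ I, M.Indep I → I ⊆ X → I.ncard ≤ n) : M.mRank X ≤ n :=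
  csSup_le (M.mRank_set_nonempty X) (by rintro m ⟨I, hI, hIX, rfl⟩; exact h I hI hIX)

lemma exists_mRank (M : Matroid α) [M.Finite] (X : Set α) :
    ∃ I, M.Indep I ∧ I ⊆ X ∧ I.ncard = M.mRank X :=
  Nat.sSup_mem (M.mRank_set_nonempty X) (M.mRank_bddAbove X)

lemma mRank_mono [M.Finite] (h : X ⊆ Y) : M.mRank X ≤ M.mRank Y :=
  mRank_le fun _ hI hIX => le_mRank hI (hIX.trans h)

lemma mRank_le_mRk (M : Matroid α) [M.Finite] (X : Set α) : M.mRank X ≤ M.mRk :=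
  mRank_le fun _ hI _ => le_mRank hI hI.subset_ground

lemma mRank_insert_of_not_mem_closure [M.Finite] (haE : a ∈ M.E) (ha : a ∉ M.closure X) :
    M.mRank (insert a X) = M.mRank X + 1 := by
  refine le_antisymm (mRank_le fun J hJ hJX => ?_) ?_
  · have h1 : J \ {a} ⊆ X := by rwa [diff_subset_iff, singleton_union]
    have h2 : (J \ {a}).ncard ≤ M.mRank X := le_mRank (hJ.subset diff_subset) h1
    by_cases haJ : a ∈ J
    · rw [← ncard_diff_singleton_add_one haJ (M.set_finite J hJ.subset_ground)]
      omega
    · rw [diff_singleton_eq_self haJ] at h2; omega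
  · obtain ⟨I, hI, hIX, hcard⟩ := M.exists_mRank X
    have haI : a ∉ I := fun h => ha (M.mem_closure_of_mem' (hIX h) haE)
    have hins : M.Indep (insert a I) := (hI.insert_indep_iff_of_notMem haI).2
      ⟨haE, fun hcl => ha (M.closure_subset_closure hIX hcl)⟩
    have := le_mRank hins (insert_subset_insert hIX)
    rwa [ncard_insert_of_notMem haI (M.set_finite I hI.subset_ground), hcard] at this

lemma key_lemma (M : Matroid α) [M.Finite] {H : Set α} (hH : M.IsHyperplane H)
    (hmod : M.IsModularFlat H) {a b : α} (haE : a ∈ M.E) (hbE : b ∈ M.E)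
    (haH : a ∉ H) (hbH : b ∉ H) (hab : a ∉ M.closure {b}) (hba : b ∉ M.closure {a}) :
    ∃ c, c ∈ H ∧ c ∈ M.closure {a, b} ∧ M.Indep {c} := by
  have hHE : H ⊆ M.E := hH.1.subset_ground
  have hne : a ≠ b := fun h => hab (by rw [h]; exact M.mem_closure_self b hbE)
  have hbn : b ∉ M.closure ∅ := fun h => hba (M.closure_subset_closure (empty_subset {a}) h)
  have hIb : M.Indep {b} := by
    rw [show ({b} : Set α) = insert b (∅ : Set α) by simp]
    exact (M.empty_indep.insert_indep_iff_of_notMem (notMem_empty b)).2 ⟨hbE, by simpa⟩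
  have hIab : M.Indep {a, b} :=
    (hIb.insert_indep_iff_of_notMem (by simpa using hne)).2 ⟨haE, hab⟩
  have habE : ({a, b} : Set α) ⊆ M.E := insert_subset haE (singleton_subset_iff.2 hbE)
  have haL : a ∈ M.closure {a, b} := M.subset_closure _ habE (mem_insert a {b})
  have heq := hmod.2 (M.closure {a, b}) (M.flat_closure' _)
  have hclH : M.closure H = H := hH.1.closure
  have hins : M.mRank (insert a H) = M.mRank H + 1 :=
    mRank_insert_of_not_mem_closure haE (by rwa [hclH])
  have hHL : M.mRank (H ∪ M.closure {a, b}) = M.mRk := by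
    refine le_antisymm (M.mRank_le_mRk _) ?_
    rw [← hH.2, ← hins]
    exact mRank_mono (insert_subset (Or.inr haL) subset_union_left)
  have hL2 : 2 ≤ M.mRank (M.closure {a, b}) := by
    have h := le_mRank hIab (M.subset_closure _ habE)
    rwa [ncard_pair hne] at h
  have hHrk := hH.2
  have h1 : 1 ≤ M.mRank (H ∩ M.closure {a, b}) := by
    rw [hHL] at heq
    omega
  obtain ⟨I, hI, hIsub, hcard⟩ := M.exists_mRank (H ∩ M.closure {a, b})
  obtain ⟨c, hc⟩ := nonempty_of_ncard_ne_zero (s := I) (by omega)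
  exact ⟨c, (hIsub hc).1, (hIsub hc).2, hI.subset (singleton_subset_iff.2 hc)⟩

lemma round_closure_compl (M : Matroid α) [M.Finite] {H : Set α} (hH : M.IsHyperplane H)
    (hmod : M.IsModularFlat H) : (M ↾ M.closure (M.E \ H)).Round := by
  set K := M.closure (M.E \ H) with hKdef
  have hKE : K ⊆ M.E := M.closure_subset_ground _
  have hCK : M.E \ H ⊆ K := M.subset_closure _ diff_subset
  have hKcl : M.closure K = K := M.closure_closure _
  have hclH : M.closure H = H := hH.1.closure
  rintro F F' ⟨⟨hF, hFne⟩, ⟨hF', hF'ne⟩, hun⟩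
  rw [restrict_ground_eq] at hFne hF'ne hun
  have hFK : F ⊆ K := by simpa using hF.subset_ground
  have hF'K : F' ⊆ K := by simpa using hF'.subset_ground
  have hFeq : M.closure F ∩ K = F := by
    rw [← restrict_closure' hKE hFK]; exact hF.closure
  have hF'eq : M.closure F' ∩ K = F' := by
    rw [← restrict_closure' hKE hF'K]; exact hF'.closure
  have hmemF : ∀ X ⊆ F, ∀ x ∈ K, x ∈ M.closure X → x ∈ F := fun X hXF x hxK hx =>
    hFeq ▸ ⟨M.closure_subset_closure hXF hx, hxK⟩
  have hmemF' : ∀ X ⊆ F', ∀ x ∈ K, x ∈ M.closure X → x ∈ F' := fun X hXF x hxK hx =>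
    hF'eq ▸ ⟨M.closure_subset_closure hXF hx, hxK⟩
  have hCF : ¬ (M.E \ H ⊆ F) := fun h =>
    hFne (subset_antisymm hFK (subset_inter (M.closure_subset_closure h) Subset.rfl |>.trans
      hFeq.subset))
  have hCF' : ¬ (M.E \ H ⊆ F') := fun h =>
    hF'ne (subset_antisymm hF'K (subset_inter (M.closure_subset_closure h) Subset.rfl |>.trans
      hF'eq.subset))
  obtain ⟨a, haC, haF⟩ := not_subset.1 hCF
  obtain ⟨b, hbC, hbF'⟩ := not_subset.1 hCF'
  have haK : a ∈ K := hCK haC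
  have hbK : b ∈ K := hCK hbC
  have haF' : a ∈ F' := (show a ∈ F ∪ F' from hun ▸ haK).resolve_left haF
  have hbF : b ∈ F := (show b ∈ F ∪ F' from hun ▸ hbK).resolve_right hbF'
  have hab : a ∉ M.closure {b} := fun h =>
    haF (hmemF {b} (singleton_subset_iff.2 hbF) a haK h)
  have hba : b ∉ M.closure {a} := fun h =>
    hbF' (hmemF' {a} (singleton_subset_iff.2 haF') b hbK h)
  obtain ⟨c, hcH, hcL, hcI⟩ :=
    M.key_lemma hH hmod (hKE haK) (hKE hbK) haC.2 hbC.2 hab hba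
  have hcK : c ∈ K :=
    (hKcl ▸ M.closure_subset_closure (insert_subset haK (singleton_subset_iff.2 hbK))) hcL
  have hc0 : c ∉ M.closure ∅ := by
    simpa using hcI.notMem_closure_diff_of_mem (mem_singleton c)
  rcases (show c ∈ F ∪ F' from hun ▸ hcK) with hcF | hcF'
  · have hcb : c ∉ M.closure {b} := by
      intro h
      have hx := M.closure_exchange (X := (∅ : Set α)) (e := c) (f := b)
        ⟨by simpa using h, hc0⟩
      have : b ∈ M.closure {c} := by simpa using hx.1
      exact hbC.2 (hclH ▸ M.closure_subset_closure (singleton_subset_iff.2 hcH) this)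
    have hx := M.closure_exchange (X := ({b} : Set α)) (e := c) (f := a) ⟨hcL, hcb⟩
    exact haF (hmemF {c, b} (insert_subset hcF (singleton_subset_iff.2 hbF)) a haK hx.1)
  · have hca : c ∉ M.closure {a} := by
      intro h
      have hx := M.closure_exchange (X := (∅ : Set α)) (e := c) (f := a)
        ⟨by simpa using h, hc0⟩
      have : a ∈ M.closure {c} := by simpa using hx.1
      exact haC.2 (hclH ▸ M.closure_subset_closure (singleton_subset_iff.2 hcH) this)
    have hcL' : c ∈ M.closure {b, a} := by rw [Set.pair_comm b a]; exact hcL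
    have hx := M.closure_exchange (X := ({a} : Set α)) (e := c) (f := b) ⟨hcL', hca⟩
    exact hbF' (hmemF' {c, a} (insert_subset hcF' (singleton_subset_iff.2 haF')) b hbK hx.1)

lemma round_subset_dichotomy (M : Matroid α) {H K R : Set α} (hHflat : M.IsFlat H)
    (hEHK : M.E \ H ⊆ K) (hKE : K ⊆ M.E) (hKcl : M.closure K = K)
    (hR : M.IsFlat R) (hround : M.RoundSet R) : R ⊆ H ∨ R ⊆ K := by
  by_contra hcon
  push_neg at hcon
  obtain ⟨hRH, hRK⟩ := hcon
  have hRE : R ⊆ M.E := hR.subset_ground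
  have h1 : (M ↾ R).IsFlat (R ∩ H) := by
    refine flat_of_closure_eq' ?_
    rw [restrict_closure' hRE inter_subset_left]
    refine subset_antisymm ?_ ?_
    · intro x hx
      refine ⟨hx.2, ?_⟩
      exact hHflat.closure ▸ M.closure_subset_closure inter_subset_right hx.1
    · exact subset_inter
        (M.subset_closure _ (inter_subset_left.trans hRE)) inter_subset_left
  have h2 : (M ↾ R).IsFlat (R ∩ K) := by
    refine flat_of_closure_eq' ?_
    rw [restrict_closure' hRE inter_subset_left]
    refine subset_antisymm ?_ ?_
    · intro x hx
      refine ⟨hx.2, ?_⟩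
      exact hKcl ▸ M.closure_subset_closure inter_subset_right hx.1
    · exact subset_inter
        (M.subset_closure _ (inter_subset_left.trans hRE)) inter_subset_left
  refine hround.2 (R ∩ H) (R ∩ K) ⟨⟨h1, ?_⟩, ⟨h2, ?_⟩, ?_⟩
  · rw [restrict_ground_eq]
    exact fun h => hRH (by rw [← h]; exact inter_subset_right)
  · rw [restrict_ground_eq]
    exact fun h => hRK (by rw [← h]; exact inter_subset_right)
  · rw [restrict_ground_eq, ← inter_union_distrib_left]
    refine subset_antisymm inter_subset_left (fun x hx => ⟨hx, ?_⟩)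
    by_cases hxH : x ∈ H
    · exact Or.inl hxH
    · exact Or.inr (hEHK ⟨hRE hx, hxH⟩)

end Matroid

/-- Let `H` be a modular hyperplane of `M` with complementary cocircuit `C* = E(M) − H`.
Then `cl C*` is a rotunda of `M`, and every other rotunda of `M` is contained in `H`. -/
theorem closure_cocircuit_rotunda {α : Type*} (M : Matroid α) [M.Finite]
    (H : Set α) (hH : M.IsHyperplane H) (hmod : M.IsModularFlat H) :
    M.Rotunda (M.closure (M.E \ H)) ∧
    ∀ R, M.Rotunda R → R ≠ M.closure (M.E \ H) → R ⊆ H := by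
  have hHE : H ⊆ M.E := hH.1.subset_ground
  have hne : (M.E \ H).Nonempty := by
    rw [nonempty_iff_ne_empty]
    intro h
    have hHeq : H = M.E := subset_antisymm hHE (diff_eq_empty.1 h)
    have := hH.2
    rw [mRk, hHeq] at this
    omega
  have hKE : M.closure (M.E \ H) ⊆ M.E := M.closure_subset_ground _
  have hKflat : M.IsFlat (M.closure (M.E \ H)) := M.flat_closure' _
  have hKcl : M.closure (M.closure (M.E \ H)) = M.closure (M.E \ H) := M.closure_closure _
  obtain ⟨e, he⟩ := hne
  have heK : e ∈ M.closure (M.E \ H) := M.subset_closure _ diff_subset he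
  have hKround : M.RoundSet (M.closure (M.E \ H)) :=
    ⟨hKE, M.round_closure_compl hH hmod⟩
  have hdich : ∀ R, M.IsFlat R → M.RoundSet R → R ⊆ H ∨ R ⊆ M.closure (M.E \ H) :=
    fun R hRf hRr => M.round_subset_dichotomy hH.1
      (M.subset_closure _ diff_subset) hKE hKcl hRf hRr
  constructor
  · refine ⟨hKflat, hKround, fun R' hf hr hsub => ?_⟩
    rcases hdich R' hf hr with h | h
    · exact absurd (h (hsub heK)) he.2
    · exact subset_antisymm h hsub
  · intro R hRot hneq
    rcases hdich R hRot.1 hRot.2.1 with h | h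
    · exact h
    · exact absurd (hRot.2.2 _ hKflat hKround h).symm hneq
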